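/- Let C be a measure space, p > 2, and w ∈ L²(C) ∩ L^p(C) a nonzero function. Then ∫_C |w|² log(|w|²/‖w‖_{L²}²) dμ ≤ (p/(p-2)) · ‖w‖_{L²}² · log(‖w‖_{L^p}²/‖w‖_{L²}²). (This follows by differentiating the Hölder interpolation inequality ‖w‖_q ≤ ‖w‖_2^ζ ‖w‖_p^{1-ζ}, ζ = 2(p-q)/(q(p-2)), with respect to q at q = 2.) -/

import Mathlib

open MeasureTheory

/-- `(‖w‖_q)^q = ∫ |w|^q` for `q > 0`. -/
lemma aux_eLpNorm_rpow {C : Type*} [MeasurableSpace C] (μ : Measure C)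
    (q : ℝ) (hq : 0 < q) (w : C → ℝ) (hw : MemLp w (ENNReal.ofReal q) μ) :
    ((eLpNorm w (ENNReal.ofReal q) μ).toReal) ^ q = ∫ x, |w x| ^ q ∂μ := by
  have h0 : ENNReal.ofReal q ≠ 0 := by
    simp [ENNReal.ofReal_eq_zero]; linarith
  have ht : ENNReal.ofReal q ≠ ⊤ := ENNReal.ofReal_ne_top
  have htq : (ENNReal.ofReal q).toReal = q := ENNReal.toReal_ofReal hq.le
  rw [hw.eLpNorm_eq_integral_rpow_norm h0 ht, htq]
  have hI : 0 ≤ ∫ a, ‖w a‖ ^ q ∂μ := by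
    apply integral_nonneg; intro x; positivity
  rw [ENNReal.toReal_ofReal (by positivity), ← Real.rpow_mul hI,
    inv_mul_cancel₀ hq.ne', Real.rpow_one]
  simp [Real.norm_eq_abs]

/-- pointwise inequality -/
lemma aux_pointwise (p N P : ℝ) (hp : 2 < p) (hN : 0 < N) (hP : 0 < P) (t : ℝ) :
    t ^ 2 * Real.log (t ^ 2 / N ^ 2) ≤
      2 / (p - 2) * ((N ^ p / P ^ p / N ^ (p - 2)) * |t| ^ p - t ^ 2
        - t ^ 2 * Real.log (N ^ p / P ^ p)) := by
  rcases eq_or_ne t 0 with rfl | ht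
  · simp [Real.zero_rpow (by positivity : p ≠ (0:ℝ))]
  · set u := |t| with hu_def
    have hu : 0 < u := abs_pos.mpr ht
    set c : ℝ := N ^ p / P ^ p with hc_def
    have hc : 0 < c := by positivity
    have key : Real.log (c * (u ^ (p - 2) / N ^ (p - 2))) ≤
        c * (u ^ (p - 2) / N ^ (p - 2)) - 1 :=
      Real.log_le_sub_one_of_pos (by positivity)
    have hne : p - 2 ≠ 0 := by linarith
    have h1 : Real.log (u ^ (p - 2) / N ^ (p - 2)) =
        (p - 2) * Real.log u - (p - 2) * Real.log N := by
      rw [Real.log_div (by positivity) (by positivity), Real.log_rpow hu, Real.log_rpow hN]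
    have hlogexp : Real.log (c * (u ^ (p - 2) / N ^ (p - 2))) =
        Real.log c + (p - 2) * Real.log u - (p - 2) * Real.log N := by
      rw [Real.log_mul hc.ne' (by positivity), h1]; ring
    have hlhs : t ^ 2 * Real.log (t ^ 2 / N ^ 2) = u ^ 2 * (2 * Real.log u - 2 * Real.log N) := by
      rw [← sq_abs t, ← hu_def, Real.log_div (pow_ne_zero 2 hu.ne') (by positivity),
        Real.log_pow, Real.log_pow]
      push_cast; ring
    have hup : u ^ 2 * u ^ (p - 2) = u ^ p := by
      rw [← Real.rpow_two, ← Real.rpow_add hu]; ring_nf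
    have key2 : Real.log c + (p - 2) * Real.log u - (p - 2) * Real.log N ≤
        c * (u ^ (p - 2) / N ^ (p - 2)) - 1 := by rw [← hlogexp]; exact key
    have hmul : u ^ 2 * ((p - 2) * (Real.log u - Real.log N)) ≤
        u ^ 2 * (c * (u ^ (p - 2) / N ^ (p - 2)) - 1 - Real.log c) :=
      mul_le_mul_of_nonneg_left (by linarith) (sq_nonneg u)
    have hpos : (0:ℝ) < 2 / (p - 2) := div_pos two_pos (by linarith)
    have := mul_le_mul_of_nonneg_left hmul hpos.le
    rw [hlhs]
    calc u ^ 2 * (2 * Real.log u - 2 * Real.log N)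
        = 2 / (p - 2) * (u ^ 2 * ((p - 2) * (Real.log u - Real.log N))) := by
          rw [div_mul_eq_mul_div, eq_div_iff hne]; ring
      _ ≤ 2 / (p - 2) * (u ^ 2 * (c * (u ^ (p - 2) / N ^ (p - 2)) - 1 - Real.log c)) := this
      _ = 2 / (p - 2) * ((c / N ^ (p - 2)) * (u ^ 2 * u ^ (p - 2)) - u ^ 2
            - u ^ 2 * Real.log c) := by ring
      _ = 2 / (p - 2) * ((c / N ^ (p - 2)) * u ^ p - u ^ 2 - u ^ 2 * Real.log c) := by
          rw [hup]
      _ = 2 / (p - 2) * ((c / N ^ (p - 2)) * |t| ^ p - t ^ 2 - t ^ 2 * Real.log c) := by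
          rw [hu_def, sq_abs]


/-- for `p > 2` and a nonzero `w ∈ L² ∩ L^p` with `|w|² log |w|²` integrable,
`∫ |w|² log(|w|²/‖w‖₂²) ≤ (p/(p-2)) ‖w‖₂² log(‖w‖_p²/‖w‖₂²)`. -/
theorem stmt5 {C : Type*} [MeasurableSpace C] (μ : Measure C) [SigmaFinite μ]
    (p : ℝ) (hp : 2 < p) (w : C → ℝ)
    (hw2 : MemLp w (ENNReal.ofReal 2) μ) (hwp : MemLp w (ENNReal.ofReal p) μ)
    (hw0 : eLpNorm w (ENNReal.ofReal 2) μ ≠ 0)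
    (hint : Integrable (fun x => (w x) ^ 2 * Real.log ((w x) ^ 2)) μ) :
    ∫ x, (w x) ^ 2 *
        Real.log ((w x) ^ 2 / ((eLpNorm w (ENNReal.ofReal 2) μ).toReal) ^ 2) ∂μ ≤
      p / (p - 2) * ((eLpNorm w (ENNReal.ofReal 2) μ).toReal) ^ 2 *
        Real.log (((eLpNorm w (ENNReal.ofReal p) μ).toReal) ^ 2
          / ((eLpNorm w (ENNReal.ofReal 2) μ).toReal) ^ 2) := by
  set N := (eLpNorm w (ENNReal.ofReal 2) μ).toReal with hN_def
  set P := (eLpNorm w (ENNReal.ofReal p) μ).toReal with hP_def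
  have hp0 : (0:ℝ) < p := by linarith
  have h2ne0 : ENNReal.ofReal p ≠ 0 := by simp [ENNReal.ofReal_eq_zero]; linarith
  have hN : 0 < N := ENNReal.toReal_pos hw0 hw2.2.ne
  have hPne : eLpNorm w (ENNReal.ofReal p) μ ≠ 0 := by
    intro h
    rw [eLpNorm_eq_zero_iff hwp.1 h2ne0] at h
    exact hw0 ((eLpNorm_congr_ae h).trans eLpNorm_zero)
  have hP : 0 < P := ENNReal.toReal_pos hPne hwp.2.ne
  -- norm identities
  have habs2 : ∀ x : ℝ, |x| ^ (2:ℝ) = x ^ 2 := fun x => by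
    rw [show (2:ℝ) = ((2:ℕ):ℝ) by norm_num, Real.rpow_natCast, sq_abs]
  have hA : ∫ x, (w x) ^ 2 ∂μ = N ^ 2 := by
    have := aux_eLpNorm_rpow μ 2 (by norm_num) w hw2
    rw [← Real.rpow_two]
    rw [this]
    exact integral_congr_ae (ae_of_all μ fun x => (habs2 (w x)).symm)
  have hB : ∫ x, |w x| ^ p ∂μ = P ^ p :=
    (aux_eLpNorm_rpow μ p hp0 w hwp).symm
  -- integrability
  have int2 : Integrable (fun x => (w x) ^ 2) μ := by
    have h := hw2.integrable_norm_rpow (by simp [ENNReal.ofReal_eq_zero]) ENNReal.ofReal_ne_top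
    rw [ENNReal.toReal_ofReal (by norm_num : (0:ℝ) ≤ 2)] at h
    exact h.congr (ae_of_all μ fun x => by
      show ‖w x‖ ^ (2:ℝ) = w x ^ 2
      rw [Real.norm_eq_abs]; exact habs2 _)
  have intp : Integrable (fun x => |w x| ^ p) μ := by
    have h := hwp.integrable_norm_rpow h2ne0 ENNReal.ofReal_ne_top
    rw [ENNReal.toReal_ofReal hp0.le] at h
    exact h.congr (ae_of_all μ fun x => by
      show ‖w x‖ ^ p = |w x| ^ p
      rw [Real.norm_eq_abs])
  have int_lhs : Integrable (fun x => (w x) ^ 2 * Real.log ((w x) ^ 2 / N ^ 2)) μ := by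
    have heq : (fun x => (w x) ^ 2 * Real.log ((w x) ^ 2 / N ^ 2)) =
        fun x => (w x) ^ 2 * Real.log ((w x) ^ 2) - (w x) ^ 2 * Real.log (N ^ 2) := by
      funext x
      rcases eq_or_ne (w x) 0 with h | h
      · simp [h]
      · rw [Real.log_div (pow_ne_zero _ h) (by positivity)]; ring
    rw [heq]
    exact hint.sub (int2.mul_const _)
  set c : ℝ := N ^ p / P ^ p with hc_def
  have int_rhs : Integrable (fun x =>
      2 / (p - 2) * ((c / N ^ (p - 2)) * |w x| ^ p - (w x) ^ 2
        - (w x) ^ 2 * Real.log c)) μ :=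
    (((intp.const_mul _).sub int2).sub (int2.mul_const _)).const_mul _
  have hle := integral_mono int_lhs int_rhs
    (fun x => aux_pointwise p N P hp hN hP (w x))
  rw [integral_const_mul] at hle
  have hsub1 : Integrable (fun x => c / N ^ (p - 2) * |w x| ^ p - w x ^ 2) μ :=
    (intp.const_mul _).sub int2
  have hmc : Integrable (fun x => c / N ^ (p - 2) * |w x| ^ p) μ := intp.const_mul _
  rw [integral_sub hsub1 (int2.mul_const _), integral_sub hmc int2,
    integral_const_mul, integral_mul_const, hA, hB] at hle
  refine hle.trans_eq ?_
  -- final algebra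
  have hNp : N ^ p ≠ 0 := by positivity
  have hPp : P ^ p ≠ 0 := by positivity
  have hNp2 : N ^ (p-2) ≠ 0 := by positivity
  have hcancel : c / N ^ (p - 2) * P ^ p = N ^ 2 := by
    rw [hc_def]
    rw [div_div, div_mul_eq_mul_div, div_eq_iff (by positivity)]
    rw [show N ^ p = N ^ (p - 2) * N ^ (2:ℝ) by rw [← Real.rpow_add hN]; ring_nf,
      Real.rpow_two]
    ring
  have hlogc : Real.log c = p * Real.log N - p * Real.log P := by
    rw [hc_def, Real.log_div hNp hPp, Real.log_rpow hN, Real.log_rpow hP]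
  have hlogPN : Real.log (P ^ 2 / N ^ 2) = 2 * Real.log P - 2 * Real.log N := by
    rw [Real.log_div (by positivity) (by positivity), Real.log_pow, Real.log_pow]
    push_cast; ring
  rw [hcancel, hlogc, hlogPN]
  field_simp
  ring
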